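/- arXiv:dg-ga/9611011 — 3 statements merged into one kernel-verified Lean document; each statement's English description precedes it below -/
import Mathlib

section
/- The spherical phylon group S(d) is the semidirect product of the orthogonal group O(d) and S^{(1)}(d) = S(d) ∩ P^{(1)}(d): every ψ ∈ S(d) factors uniquely as an orthogonal matrix composed with an element of S(d) whose linear part is the identity. -/
open Finset Matrix

/-- Composition of formal power series: `mvComp f g = f ∘ g`, i.e. the series
`f(g¹(x),…,g^d(x))` (the coefficient formula below is the usual one, valid when the
`g j` have zero constant term). -/
noncomputable def mvComp {d : ℕ} (f : MvPowerSeries (Fin d) ℝ)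
    (g : Fin d → MvPowerSeries (Fin d) ℝ) : MvPowerSeries (Fin d) ℝ :=
  fun m =>
    ∑ ν : Fin d → Fin ((m.sum fun _ e => e) + 1),
      MvPowerSeries.coeff (∑ j, Finsupp.single j (ν j : ℕ)) f *
        MvPowerSeries.coeff m (∏ j, g j ^ (ν j : ℕ))

/-- Membership in the phylon group `P(d)`: a `d`-tuple of formal power series in `d`
variables with zero constant term and invertible linear term. -/
def InPhylon {d : ℕ} (ψ : Fin d → MvPowerSeries (Fin d) ℝ) : Prop :=
  (∀ i, MvPowerSeries.constantCoeff (ψ i) = 0) ∧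
    IsUnit (Matrix.of fun i j =>
      MvPowerSeries.coeff (Finsupp.single j 1) (ψ i)).det

section Aux

lemma tm_inj {α : Type*} [DecidableEq α] {p q : α →₀ ℕ}
    (h : Finsupp.toMultiset p = Finsupp.toMultiset q) : p = q := by
  rw [← Finsupp.toMultiset_toFinsupp p, ← Finsupp.toMultiset_toFinsupp q, h]

lemma sum_one_single {α : Type*} [DecidableEq α] (p : α →₀ ℕ)
    (h : (p.sum fun _ n => n) = 1) : ∃ a, p = Finsupp.single a 1 := by
  have hc : Multiset.card (Finsupp.toMultiset p) = 1 := by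
    rw [Finsupp.card_toMultiset]; exact h
  obtain ⟨a, ha⟩ := Multiset.card_eq_one.mp hc
  exact ⟨a, tm_inj (by rw [ha, Finsupp.toMultiset_single, one_nsmul])⟩

lemma sum_zero_zero {α : Type*} [DecidableEq α] (p : α →₀ ℕ)
    (h : (p.sum fun _ n => n) = 0) : p = 0 := by
  have hc : Multiset.card (Finsupp.toMultiset p) = 0 := by
    rw [Finsupp.card_toMultiset]; exact h
  exact tm_inj (by simpa using Multiset.card_eq_zero.mp hc)

lemma single_pair_classify {α : Type*} [DecidableEq α] {a b j k : α}
    (h : Finsupp.single a 1 + Finsupp.single b 1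
        = Finsupp.single j 1 + Finsupp.single k 1) :
    (a = j ∧ b = k) ∨ (a = k ∧ b = j) := by
  by_cases haj : a = j
  · subst haj
    exact Or.inl ⟨rfl, Finsupp.single_left_injective one_ne_zero (add_left_cancel h)⟩
  · have hj := DFunLike.congr_fun h j
    simp only [Finsupp.add_apply, Finsupp.single_apply, if_neg haj] at hj
    by_cases hbj : b = j
    · subst hbj
      rw [add_comm (Finsupp.single a 1)] at h
      exact Or.inr ⟨Finsupp.single_left_injective one_ne_zero (add_left_cancel h), rfl⟩
    · simp [if_neg hbj] at hj
      split at hj <;> omega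

lemma pair_decomp {α : Type*} [DecidableEq α] {p q : α →₀ ℕ} {j k : α}
    (h : p + q = Finsupp.single j 1 + Finsupp.single k 1)
    (hp : p ≠ 0) (hq : q ≠ 0) :
    (p = Finsupp.single j 1 ∧ q = Finsupp.single k 1) ∨
    (p = Finsupp.single k 1 ∧ q = Finsupp.single j 1) := by
  have hsum : (p.sum fun _ n => n) + (q.sum fun _ n => n) = 2 := by
    have h2 : ((p + q).sum fun _ n => n) = (p.sum fun _ n => n) + (q.sum fun _ n => n) :=
      Finsupp.sum_add_index' (fun _ => rfl) (fun _ _ _ => rfl)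
    rw [← h2, h]
    have h3 : ((Finsupp.single j 1 + Finsupp.single k 1).sum fun _ n => n)
        = ((Finsupp.single j 1 : α →₀ ℕ).sum fun _ n => n)
          + ((Finsupp.single k 1 : α →₀ ℕ).sum fun _ n => n) :=
      Finsupp.sum_add_index' (fun _ => rfl) (fun _ _ _ => rfl)
    rw [h3, Finsupp.sum_single_index rfl, Finsupp.sum_single_index rfl]
  have hp1 : (p.sum fun _ n => n) ≠ 0 := fun h0 => hp (sum_zero_zero p h0)
  have hq1 : (q.sum fun _ n => n) ≠ 0 := fun h0 => hq (sum_zero_zero q h0)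
  obtain ⟨a, rfl⟩ := sum_one_single p (by omega)
  obtain ⟨b, rfl⟩ := sum_one_single q (by omega)
  rcases single_pair_classify h with ⟨rfl, rfl⟩ | ⟨rfl, rfl⟩
  · exact Or.inl ⟨rfl, rfl⟩
  · exact Or.inr ⟨rfl, rfl⟩

lemma coeff_mul_deg2 {d : ℕ} (f g : MvPowerSeries (Fin d) ℝ)
    (hf : MvPowerSeries.constantCoeff f = 0)
    (hg : MvPowerSeries.constantCoeff g = 0) (j k : Fin d) :
    MvPowerSeries.coeff (Finsupp.single j 1 + Finsupp.single k 1) (f * g) =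
      if j = k then
        MvPowerSeries.coeff (Finsupp.single j 1) f *
          MvPowerSeries.coeff (Finsupp.single j 1) g
      else
        MvPowerSeries.coeff (Finsupp.single j 1) f *
            MvPowerSeries.coeff (Finsupp.single k 1) g +
          MvPowerSeries.coeff (Finsupp.single k 1) f *
            MvPowerSeries.coeff (Finsupp.single j 1) g := by
  rw [MvPowerSeries.coeff_mul]
  set m := Finsupp.single j 1 + Finsupp.single k 1 with hm
  set S : Finset ((Fin d →₀ ℕ) × (Fin d →₀ ℕ)) :=
    if j = k then {(Finsupp.single j 1, Finsupp.single j 1)}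
    else {(Finsupp.single j 1, Finsupp.single k 1),
          (Finsupp.single k 1, Finsupp.single j 1)} with hS
  have hsub : S ⊆ antidiagonal m := by
    intro x hx
    rw [HasAntidiagonal.mem_antidiagonal]
    by_cases hjk : j = k
    · simp only [hS, if_pos hjk] at hx
      rw [Finset.mem_singleton] at hx
      subst hx; rw [hm, hjk]
    · simp only [hS, if_neg hjk] at hx
      rw [Finset.mem_insert, Finset.mem_singleton] at hx
      rcases hx with rfl | rfl
      · rfl
      · rw [hm, add_comm]
  have hvan : ∀ x ∈ antidiagonal m, x ∉ S →
      MvPowerSeries.coeff x.1 f * MvPowerSeries.coeff x.2 g = 0 := by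
    intro x hx hxS
    rw [HasAntidiagonal.mem_antidiagonal] at hx
    by_cases h1 : x.1 = 0
    · rw [h1, MvPowerSeries.coeff_zero_eq_constantCoeff_apply, hf, zero_mul]
    by_cases h2 : x.2 = 0
    · rw [h2, MvPowerSeries.coeff_zero_eq_constantCoeff_apply, hg, mul_zero]
    exfalso
    apply hxS
    rcases pair_decomp hx h1 h2 with ⟨e1, e2⟩ | ⟨e1, e2⟩ <;>
      by_cases hjk : j = k <;>
      simp_all [hS, Prod.ext_iff]
  rw [← Finset.sum_subset hsub hvan]
  by_cases hjk : j = k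
  · simp only [hS, if_pos hjk, Finset.sum_singleton]
  · have hne : (Finsupp.single j 1, Finsupp.single k 1)
        ≠ (Finsupp.single k 1, Finsupp.single j 1) := by
      intro h1
      exact hjk (Finsupp.single_left_injective one_ne_zero (congrArg Prod.fst h1))
    simp only [hS, if_neg hjk, Finset.sum_pair hne]

lemma C_sum_collapse {d : ℕ} (M : Matrix (Fin d) (Fin d) ℝ) (hM : Mᵀ * M = 1)
    (f : Fin d → MvPowerSeries (Fin d) ℝ) (i : Fin d) :
    ∑ j, MvPowerSeries.C (M j i) *
      ∑ k, MvPowerSeries.C (M j k) * f k = f i := by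
  simp_rw [Finset.mul_sum, ← mul_assoc, ← _root_.map_mul]
  rw [Finset.sum_comm]
  simp_rw [← Finset.sum_mul, ← _root_.map_sum]
  have key : ∀ k, (∑ j, M j i * M j k) = if i = k then (1 : ℝ) else 0 := by
    intro k
    have := congrFun (congrFun hM i) k
    simpa [Matrix.mul_apply, Matrix.transpose_apply, Matrix.one_apply] using this
  simp_rw [key, apply_ite (MvPowerSeries.C (σ := Fin d) (R := ℝ)), _root_.map_one, _root_.map_zero,
    ite_mul, one_mul, zero_mul, Finset.sum_ite_eq, Finset.mem_univ, if_true]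

lemma sq_collapse {d : ℕ} (M : Matrix (Fin d) (Fin d) ℝ) (hM : M * Mᵀ = 1)
    (f : Fin d → MvPowerSeries (Fin d) ℝ) :
    ∑ i, (∑ j, MvPowerSeries.C (M j i) * f j) ^ 2 = ∑ j, f j ^ 2 := by
  have hterm : ∀ x i j : Fin d,
      MvPowerSeries.C (M i x) * f i * (MvPowerSeries.C (M j x) * f j)
        = MvPowerSeries.C (M i x * M j x) * (f i * f j) := by
    intro x i j; rw [_root_.map_mul]; ring
  simp_rw [pow_two, Finset.sum_mul_sum, hterm]
  rw [Finset.sum_comm]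
  refine Eq.trans (Finset.sum_congr rfl fun j _ => Finset.sum_comm) ?_
  simp_rw [← Finset.sum_mul, ← _root_.map_sum]
  have key : ∀ j k, (∑ i, M j i * M k i) = if j = k then (1 : ℝ) else 0 := by
    intro j k
    have := congrFun (congrFun hM j) k
    simpa [Matrix.mul_apply, Matrix.transpose_apply, Matrix.one_apply] using this
  simp_rw [key, apply_ite (MvPowerSeries.C (σ := Fin d) (R := ℝ)), _root_.map_one, _root_.map_zero,
    ite_mul, one_mul, zero_mul, Finset.sum_ite_eq, Finset.mem_univ, if_true]

end Aux

/-- The spherical phylon group `S(d)` (elements of `P(d)` with `‖ψ(x)‖² = ‖x‖²`)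
is the semidirect product of `O(d)` and `S^{(1)}(d) = S(d) ∩ P^{(1)}(d)`: every
`ψ ∈ S(d)` factors uniquely as an orthogonal matrix composed with an element of
`S(d)` whose linear part is the identity. -/
theorem spherical_phylon_semidirect (d : ℕ)
    (ψ : Fin d → MvPowerSeries (Fin d) ℝ) (hψ : InPhylon ψ)
    (hsph : ∑ i, ψ i ^ 2 = ∑ i, (MvPowerSeries.X i : MvPowerSeries (Fin d) ℝ) ^ 2) :
    ∃! p : Matrix (Fin d) (Fin d) ℝ × (Fin d → MvPowerSeries (Fin d) ℝ),
      p.1ᵀ * p.1 = 1 ∧ InPhylon p.2 ∧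
      (∀ i j, MvPowerSeries.coeff (Finsupp.single j 1) (p.2 i) =
        if i = j then (1 : ℝ) else 0) ∧
      (∑ i, p.2 i ^ 2 = ∑ i, (MvPowerSeries.X i : MvPowerSeries (Fin d) ℝ) ^ 2) ∧
      (∀ i, ψ i = ∑ j, MvPowerSeries.C (p.1 i j) * p.2 j) := by
  obtain ⟨hconst, _⟩ := hψ
  set A : Matrix (Fin d) (Fin d) ℝ :=
    Matrix.of fun i j => MvPowerSeries.coeff (Finsupp.single j 1) (ψ i) with hA
  -- orthogonality of the linear part
  have hAtA : Aᵀ * A = 1 := by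
    ext j k
    have hco := congrArg (MvPowerSeries.coeff (Finsupp.single j 1 + Finsupp.single k 1)) hsph
    rw [_root_.map_sum, _root_.map_sum] at hco
    simp_rw [pow_two] at hco
    have hL : ∀ i, MvPowerSeries.coeff (Finsupp.single j 1 + Finsupp.single k 1)
        (ψ i * ψ i) = if j = k then A i j * A i j else A i j * A i k + A i k * A i j :=
      fun i => coeff_mul_deg2 (ψ i) (ψ i) (hconst i) (hconst i) j k
    have hR : ∀ i, MvPowerSeries.coeff (Finsupp.single j 1 + Finsupp.single k 1)
        ((MvPowerSeries.X i : MvPowerSeries (Fin d) ℝ) * MvPowerSeries.X i)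
          = if j = k ∧ i = j then (1 : ℝ) else 0 := by
      intro i
      rw [← pow_two, MvPowerSeries.coeff_X_pow]
      by_cases hjk : j = k
      · subst hjk
        rw [← Finsupp.single_add]
        by_cases hij : i = j
        · subst hij; simp
        · have : Finsupp.single j (1 + 1) ≠ Finsupp.single i 2 := by
            intro h
            rcases (Finsupp.single_eq_single_iff _ _ _ _).mp h with ⟨h1, _⟩ | ⟨h1, _⟩
            · exact hij h1.symm
            · exact absurd h1 (by norm_num)
          simp [this, hij]
      · have : Finsupp.single j 1 + Finsupp.single k 1 ≠ Finsupp.single i 2 := by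
          intro h
          have hj := DFunLike.congr_fun h j
          rw [Finsupp.add_apply, Finsupp.single_eq_same, Finsupp.single_apply,
            Finsupp.single_apply] at hj
          rw [if_neg (fun hh : k = j => hjk hh.symm)] at hj
          by_cases hij : i = j
          · rw [if_pos hij] at hj; omega
          · rw [if_neg hij] at hj; omega
        simp [this, hjk]
    simp_rw [hL, hR] at hco
    by_cases hjk : j = k
    · subst hjk
      simp only [eq_self_iff_true, true_and] at hco
      rw [Finset.sum_ite_eq' Finset.univ j (fun _ => (1:ℝ))] at hco
      simp only [Finset.mem_univ, if_true] at hco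
      have : (Aᵀ * A) j j = ∑ i, A i j * A i j := by
        simp [Matrix.mul_apply, Matrix.transpose_apply]
      rw [this, hco, Matrix.one_apply_eq]
    · simp only [hjk, false_and, if_false, Finset.sum_const_zero] at hco
      rw [Finset.sum_congr rfl (fun i (_ : i ∈ Finset.univ) =>
        (by ring : A i j * A i k + A i k * A i j = 2 * (A i j * A i k)))] at hco
      rw [← Finset.mul_sum] at hco
      have hz : ∑ i, A i j * A i k = 0 := by
        rcases mul_eq_zero.mp hco with h | h
        · norm_num at h
        · exact h
      have : (Aᵀ * A) j k = ∑ i, A i j * A i k := by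
        simp [Matrix.mul_apply, Matrix.transpose_apply]
      rw [this, hz, Matrix.one_apply_ne hjk]
  have hAAt : A * Aᵀ = 1 := mul_eq_one_comm.mp hAtA
  -- the normalized part
  set φ : Fin d → MvPowerSeries (Fin d) ℝ :=
    fun i => ∑ j, MvPowerSeries.C (A j i) * ψ j with hφ
  have hφconst : ∀ i, MvPowerSeries.constantCoeff (φ i) = 0 := by
    intro i
    show MvPowerSeries.constantCoeff
      (∑ j, MvPowerSeries.C (A j i) * ψ j) = 0
    simp only [_root_.map_sum, _root_.map_mul, MvPowerSeries.constantCoeff_C]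
    simp [hconst]
  have hφlin : ∀ i k, MvPowerSeries.coeff (Finsupp.single k 1) (φ i)
      = if i = k then (1 : ℝ) else 0 := by
    intro i k
    show MvPowerSeries.coeff (Finsupp.single k 1)
      (∑ j, MvPowerSeries.C (A j i) * ψ j) = _
    simp only [_root_.map_sum, MvPowerSeries.coeff_C_mul]
    have : ∀ j, A j i * MvPowerSeries.coeff (Finsupp.single k 1) (ψ j) = A j i * A j k :=
      fun j => rfl
    simp_rw [this]
    have := congrFun (congrFun hAtA i) k
    simpa [Matrix.mul_apply, Matrix.transpose_apply, Matrix.one_apply] using this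
  have hφph : InPhylon φ := by
    refine ⟨hφconst, ?_⟩
    have : (Matrix.of fun i j => MvPowerSeries.coeff (Finsupp.single j 1) (φ i))
        = (1 : Matrix (Fin d) (Fin d) ℝ) := by
      ext i j
      rw [Matrix.of_apply, hφlin i j, Matrix.one_apply]
    rw [this]
    simp
  have hφsph : ∑ i, φ i ^ 2 = ∑ i, (MvPowerSeries.X i : MvPowerSeries (Fin d) ℝ) ^ 2 := by
    show ∑ i, (∑ j, MvPowerSeries.C (A j i) * ψ j) ^ 2 = _
    rw [sq_collapse A hAAt ψ]
    exact hsph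
  have hfact : ∀ i, ψ i = ∑ j, MvPowerSeries.C (A i j) * φ j := by
    intro i
    show ψ i = ∑ j, MvPowerSeries.C (A i j)
      * ∑ k, MvPowerSeries.C (A k j) * ψ k
    have := C_sum_collapse Aᵀ (by rw [Matrix.transpose_transpose]; exact hAAt) ψ i
    simp only [Matrix.transpose_apply] at this
    exact this.symm
  refine ⟨⟨A, φ⟩, ⟨hAtA, hφph, hφlin, hφsph, hfact⟩, ?_⟩
  rintro ⟨B, χ⟩ ⟨hB, hχph, hχlin, hχsph, hfact'⟩
  have hBA : B = A := by
    ext i j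
    have : A i j = MvPowerSeries.coeff (Finsupp.single j 1) (ψ i) := rfl
    rw [this, hfact' i, _root_.map_sum]
    simp_rw [MvPowerSeries.coeff_C_mul, hχlin]
    simp [mul_ite, mul_one, mul_zero, Finset.sum_ite_eq']
  subst hBA
  have hχφ : χ = φ := by
    funext i
    have hc := C_sum_collapse A hAtA (fun k => χ k) i
    show χ i = ∑ j, MvPowerSeries.C (A j i) * ψ j
    rw [← hc]
    apply Finset.sum_congr rfl
    intro j _
    rw [← hfact' j]
  rw [hχφ]
end

section
/- Let f, g be one-variable formal power series starting with positive-definite quadratic terms (f(x) = (1/2)f_2 x² + ..., f_2 > 0, similarly g). Then there exists a unique ψ in the identity component P_0(1) (formal power series with ψ(0)=0 and ψ'(0) > 0) such that f(ψ^{-1}(x)) = g(x). -/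
open PowerSeries

/-- Composition `f ∘ g` of one-variable formal power series, i.e. `f(g(x))`
(the coefficient formula is the usual one, valid when `g` has zero constant term). -/
noncomputable def pcomp (f g : PowerSeries ℝ) : PowerSeries ℝ :=
  PowerSeries.mk fun n =>
    ∑ k ∈ Finset.range (n + 1), PowerSeries.coeff k f * PowerSeries.coeff n (g ^ k)

open PowerSeries

lemma coeff_pow_eq_zero' {a : PowerSeries ℝ} (ha : constantCoeff a = 0) {j k : ℕ}
    (h : j < k) : coeff j (a ^ k) = 0 := by
  obtain ⟨a', rfl⟩ := X_dvd_iff.mpr ha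
  rw [mul_pow, coeff_X_pow_mul', if_neg (not_le.mpr h)]

lemma coeff_pow_congr {a b : PowerSeries ℝ} (ha : constantCoeff a = 0)
    (hb : constantCoeff b = 0) {m : ℕ} (hab : ∀ i, i ≤ m → coeff i a = coeff i b) :
    ∀ (k n : ℕ), n + 1 ≤ m + k → coeff n (a ^ k) = coeff n (b ^ k) := by
  intro k
  induction k with
  | zero => intro n _; rfl
  | succ k ih =>
    intro n hn
    rw [pow_succ, pow_succ, coeff_mul, coeff_mul]
    refine Finset.sum_congr rfl fun p hp => ?_
    have hpsum := Finset.HasAntidiagonal.mem_antidiagonal.mp hp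
    by_cases h0 : p.2 = 0
    · rw [h0]
      simp [coeff_zero_eq_constantCoeff, ha, hb]
    by_cases hm : p.2 ≤ m
    · rw [hab _ hm, ih p.1 (by omega)]
    · have h1 : p.1 < k := by omega
      rw [coeff_pow_eq_zero' ha h1, coeff_pow_eq_zero' hb h1, zero_mul, zero_mul]
open PowerSeries

noncomputable def tc (f g : PowerSeries ℝ) : ℕ → ℝ
  | 0 => 0
  | 1 => Real.sqrt (coeff 2 f / coeff 2 g)
  | n + 2 =>
    (coeff (n + 3) f -
        ∑ k ∈ Finset.range (n + 4), coeff k g *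
          coeff (n + 3)
            ((PowerSeries.mk fun i => if _ : i < n + 2 then tc f g i else 0) ^ k)) /
      (2 * coeff 2 g * tc f g 1)

noncomputable def Tr (f g : PowerSeries ℝ) (n : ℕ) : PowerSeries ℝ :=
  PowerSeries.mk fun i => if i < n + 2 then tc f g i else 0

lemma tc_succ (f g : PowerSeries ℝ) (n : ℕ) :
    tc f g (n + 2) =
      (coeff (n + 3) f -
          ∑ k ∈ Finset.range (n + 4), coeff k g * coeff (n + 3) (Tr f g n ^ k)) /
        (2 * coeff 2 g * tc f g 1) := by
  conv_lhs => rw [tc]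
  simp only [dite_eq_ite, Tr]

lemma Tr_coeff0 (f g : PowerSeries ℝ) (n : ℕ) : constantCoeff (Tr f g n) = 0 := by
  rw [← coeff_zero_eq_constantCoeff, Tr, coeff_mk]
  simp [tc]

lemma Tr_coeff (f g : PowerSeries ℝ) (n i : ℕ) :
    coeff i (Tr f g n) = if i < n + 2 then tc f g i else 0 := by
  rw [Tr, coeff_mk]

lemma sq_coeff (ψ : PowerSeries ℝ) (n : ℕ) :
    coeff n (ψ ^ 2) = ∑ i ∈ Finset.range (n + 1), coeff i ψ * coeff (n - i) ψ := by
  rw [pow_two, coeff_mul, Finset.Nat.sum_antidiagonal_eq_sum_range_succ_mk]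

lemma sum_split (f g : PowerSeries ℝ) (hg1 : coeff 1 g = 0)
    (ψ : PowerSeries ℝ) (h0 : constantCoeff ψ = 0) (n : ℕ)
    (hlt : ∀ i, i < n + 2 → coeff i ψ = tc f g i) :
    ∑ k ∈ Finset.range (n + 4), coeff k g * coeff (n + 3) (ψ ^ k)
      = (∑ k ∈ Finset.range (n + 4), coeff k g * coeff (n + 3) (Tr f g n ^ k))
        + 2 * coeff 2 g * (tc f g 1 * coeff (n + 2) ψ) := by
  have hT0 : constantCoeff (Tr f g n) = 0 := Tr_coeff0 f g n
  have hagree : ∀ i, i ≤ n + 1 → coeff i ψ = coeff i (Tr f g n) := by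
    intro i hi
    rw [Tr_coeff, if_pos (by omega), hlt i (by omega)]
  -- the square coefficient identity
  have hsq : coeff (n + 3) (ψ ^ 2)
      = coeff (n + 3) (Tr f g n ^ 2) + 2 * (tc f g 1 * coeff (n + 2) ψ) := by
    rw [sq_coeff, sq_coeff]
    have key : ∀ i ∈ Finset.range (n + 4),
        coeff i ψ * coeff (n + 3 - i) ψ
          = coeff i (Tr f g n) * coeff (n + 3 - i) (Tr f g n)
            + ((if i = 1 then tc f g 1 * coeff (n + 2) ψ else 0)
              + (if i = n + 2 then tc f g 1 * coeff (n + 2) ψ else 0)) := by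
      intro i hi
      have hi' : i ≤ n + 3 := by have := Finset.mem_range.mp hi; omega
      by_cases e0 : i = 0
      · subst e0
        rw [coeff_zero_eq_constantCoeff, h0, hT0]
        simp
      by_cases e1 : i = 1
      · subst e1
        have : n + 3 - 1 = n + 2 := by omega
        rw [this, Tr_coeff, Tr_coeff, if_pos (by omega), if_neg (by omega),
          hlt 1 (by omega)]
        simp
      by_cases e2 : i = n + 2
      · subst e2
        have : n + 3 - (n + 2) = 1 := by omega
        simp only [this, Tr_coeff]
        rw [if_neg (by omega : ¬ n + 2 < n + 2), if_pos (by omega : 1 < n + 2),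
          if_neg e1, if_pos trivial, hlt 1 (by omega)]
        ring
      by_cases e3 : i = n + 3
      · subst e3
        have : n + 3 - (n + 3) = 0 := by omega
        rw [this, coeff_zero_eq_constantCoeff, h0, hT0]
        simp [e1, e2]
      · -- 2 ≤ i ≤ n + 1
        have h2 : 2 ≤ i := by omega
        have h3 : i ≤ n + 1 := by omega
        rw [hagree i h3, hagree (n + 3 - i) (by omega), if_neg e1, if_neg e2]
        ring
    rw [Finset.sum_congr rfl key, Finset.sum_add_distrib, Finset.sum_add_distrib,
      Finset.sum_ite_eq' (Finset.range (n + 4)) 1,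
      Finset.sum_ite_eq' (Finset.range (n + 4)) (n + 2),
      if_pos (Finset.mem_range.mpr (by omega)), if_pos (Finset.mem_range.mpr (by omega))]
    ring
  -- now split the big sum
  have key2 : ∀ k ∈ Finset.range (n + 4),
      coeff k g * coeff (n + 3) (ψ ^ k)
        = coeff k g * coeff (n + 3) (Tr f g n ^ k)
          + (if k = 2 then coeff 2 g * (2 * (tc f g 1 * coeff (n + 2) ψ)) else 0) := by
    intro k hk
    by_cases e0 : k = 0
    · subst e0; simp
    by_cases e1 : k = 1
    · subst e1; simp [hg1]
    by_cases e2 : k = 2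
    · subst e2; rw [hsq]; ring_nf; simp
    · have h3 : 3 ≤ k := by omega
      rw [coeff_pow_congr h0 hT0 hagree k (n + 3) (by omega), if_neg e2, add_zero]
  rw [Finset.sum_congr rfl key2, Finset.sum_add_distrib,
    Finset.sum_ite_eq' (Finset.range (n + 4)) 2,
    if_pos (Finset.mem_range.mpr (by omega))]
  ring

lemma tc_zero (f g : PowerSeries ℝ) : tc f g 0 = 0 := by rw [tc]

lemma tc_one (f g : PowerSeries ℝ) :
    tc f g 1 = Real.sqrt (coeff 2 f / coeff 2 g) := by rw [tc]

lemma coeff_pcomp (f g : PowerSeries ℝ) (n : ℕ) :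
    coeff n (pcomp f g) =
      ∑ k ∈ Finset.range (n + 1), coeff k f * coeff n (g ^ k) := by
  rw [pcomp, coeff_mk]

lemma sum_two (g ψ : PowerSeries ℝ) (hg1 : coeff 1 g = 0)
    (h0 : constantCoeff ψ = 0) :
    ∑ k ∈ Finset.range 3, coeff k g * coeff 2 (ψ ^ k)
      = coeff 2 g * (coeff 1 ψ) ^ 2 := by
  rw [Finset.sum_range_succ, Finset.sum_range_succ, Finset.sum_range_one, sq_coeff,
    Finset.sum_range_succ, Finset.sum_range_succ, Finset.sum_range_one]
  norm_num [hg1, coeff_zero_eq_constantCoeff, h0]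
  left; ring

lemma char (f g : PowerSeries ℝ) (hf2 : 0 < coeff 2 f)
    (hg1 : coeff 1 g = 0) (hg2 : 0 < coeff 2 g)
    (ψ : PowerSeries ℝ) (h0 : constantCoeff ψ = 0) (h1 : 0 < coeff 1 ψ)
    (hc : pcomp g ψ = f) : ∀ n, coeff n ψ = tc f g n := by
  have hc1 : 0 < tc f g 1 := by
    rw [tc_one]; exact Real.sqrt_pos.mpr (div_pos hf2 hg2)
  have heq : ∀ n, ∑ k ∈ Finset.range (n + 1), coeff k g * coeff n (ψ ^ k)
      = coeff n f := by
    intro n; rw [← hc, coeff_pcomp]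
  have hden : 2 * coeff 2 g * tc f g 1 ≠ 0 := by positivity
  intro n
  induction n using Nat.strong_induction_on with
  | _ n ih =>
    match n with
    | 0 => rw [coeff_zero_eq_constantCoeff, h0, tc_zero]
    | 1 =>
      have h2 := heq 2
      rw [sum_two g ψ hg1 h0] at h2
      have hsq : (coeff 1 ψ) ^ 2 = coeff 2 f / coeff 2 g := by
        field_simp
        linarith [h2]
      rw [tc_one, ← hsq, Real.sqrt_sq h1.le]
    | (m + 2) =>
      have hlt : ∀ i, i < m + 2 → coeff i ψ = tc f g i := fun i hi => ih i hi
      have h3 := heq (m + 3)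
      rw [sum_split f g hg1 ψ h0 m hlt] at h3
      rw [tc_succ, eq_div_iff hden]
      nlinarith [h3]

lemma exist_part (f g : PowerSeries ℝ)
    (hf0 : constantCoeff f = 0) (hf1 : coeff 1 f = 0) (hf2 : 0 < coeff 2 f)
    (hg0 : constantCoeff g = 0) (hg1 : coeff 1 g = 0) (hg2 : 0 < coeff 2 g) :
    pcomp g (PowerSeries.mk (tc f g)) = f := by
  set ψ := PowerSeries.mk (tc f g) with hψ
  have h0 : constantCoeff ψ = 0 := by
    rw [← coeff_zero_eq_constantCoeff, hψ, coeff_mk, tc_zero]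
  have hc1 : 0 < tc f g 1 := by
    rw [tc_one]; exact Real.sqrt_pos.mpr (div_pos hf2 hg2)
  have hden : 2 * coeff 2 g * tc f g 1 ≠ 0 := by positivity
  ext n
  rw [coeff_pcomp]
  match n with
  | 0 =>
    rw [Finset.sum_range_one, ← coeff_zero_eq_constantCoeff] at *
    simp [hg0, hf0, coeff_zero_eq_constantCoeff]
  | 1 =>
    rw [Finset.sum_range_succ, Finset.sum_range_one]
    simp [hg1, hf1, coeff_zero_eq_constantCoeff, hg0]
  | 2 =>
    rw [sum_two g ψ hg1 h0, hψ, coeff_mk, tc_one,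
      Real.sq_sqrt (div_pos hf2 hg2).le, mul_div_cancel₀ _ hg2.ne']
  | (m + 3) =>
    have hlt : ∀ i, i < m + 2 → coeff i ψ = tc f g i := fun i _ => by
      rw [hψ, coeff_mk]
    rw [sum_split f g hg1 ψ h0 m hlt]
    have : coeff (m + 2) ψ = tc f g (m + 2) := by rw [hψ, coeff_mk]
    rw [this, tc_succ]
    field_simp
    ring

/-- If `f, g ∈ M(1)` are one-variable formal power series beginning with
positive-definite quadratic terms, there is a unique `ψ ∈ P₀(1)` (zero constant term,
positive linear coefficient) with `f(ψ⁻¹(x)) = g(x)`, i.e. `g ∘ ψ = f`. -/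
theorem unique_transfer_one_dim (f g : PowerSeries ℝ)
    (hf0 : PowerSeries.constantCoeff f = 0) (hf1 : PowerSeries.coeff 1 f = 0)
    (hf2 : 0 < PowerSeries.coeff 2 f)
    (hg0 : PowerSeries.constantCoeff g = 0) (hg1 : PowerSeries.coeff 1 g = 0)
    (hg2 : 0 < PowerSeries.coeff 2 g) :
    ∃! ψ : PowerSeries ℝ,
      PowerSeries.constantCoeff ψ = 0 ∧ 0 < PowerSeries.coeff 1 ψ ∧
        pcomp g ψ = f := by
  refine ⟨PowerSeries.mk (tc f g), ⟨?_, ?_, exist_part f g hf0 hf1 hf2 hg0 hg1 hg2⟩, ?_⟩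
  · rw [← coeff_zero_eq_constantCoeff, coeff_mk, tc_zero]
  · rw [coeff_mk, tc_one]
    exact Real.sqrt_pos.mpr (div_pos hf2 hg2)
  · rintro y ⟨y0, y1, yc⟩
    ext n
    rw [char f g hf2 hg1 hg2 y y0 y1 yc n, coeff_mk]
end

section
/- If f is a one-variable formal power series in M(1) that is even (f(-x) = f(x)) with f(x) = (1/2)f_2 x² + ... and f_2 > 0, then the unique ψ ∈ P_0(1) with f(ψ^{-1}(x)) = x² is an odd power series: ψ(-x) = -ψ(x). -/
open PowerSeries

/-- If `f ∈ M(1)` is even (`f(-x) = f(x)`), with `f = (1/2) f₂ x² + ⋯`, `f₂ > 0`,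
then the unique `ψ ∈ P₀(1)` with `f(ψ⁻¹(x)) = x²` — equivalently `ψ² = f` — is an
odd power series: `ψ(-x) = -ψ(x)`. -/
theorem morse_map_of_even_is_odd (f : PowerSeries ℝ)
    (hf0 : PowerSeries.constantCoeff f = 0) (hf1 : PowerSeries.coeff 1 f = 0)
    (hf2 : 0 < PowerSeries.coeff 2 f)
    (heven : PowerSeries.rescale (-1) f = f)
    (ψ : PowerSeries ℝ)
    (hψ0 : PowerSeries.constantCoeff ψ = 0)
    (hψ1 : 0 < PowerSeries.coeff 1 ψ)
    (hψf : ψ ^ 2 = f) :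
    PowerSeries.rescale (-1) ψ = -ψ := by
  have h1 : (rescale (-1) ψ) * (rescale (-1) ψ) = ψ * ψ := by
    rw [← sq, ← map_pow, hψf, heven, ← hψf, sq]
  rcases mul_self_eq_mul_self_iff.mp h1 with h | h
  · exfalso
    have := congrArg (PowerSeries.coeff 1) h
    rw [coeff_rescale] at this
    simp at this
    linarith
  · exact h
end
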